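/- Let C_P = C_1 ⊗ C_2 be a product code with non-binary MDS components. Every obvious type-II stopping set (one equal to its rectangular support, an ℓ_1 × ℓ_2 full rectangle with ℓ_1 ≥ d_1, ℓ_2 ≥ d_2) is the support of a codeword of C_P; specifically, there exist x ∈ C_1 of weight ℓ_1 with support the rows of S and y ∈ C_2 of weight ℓ_2 with support the columns of S, and the outer (Kronecker) product x ⊗ y is a codeword of C_P with support exactly S. -/

import Mathlib

open Finset Module

section Aux
variable {F : Type} [Field F] [Fintype F] [DecidableEq F] {n : ℕ}

/-- Functions supported inside `A`. -/
def suppMod (F : Type) [Field F] (n : ℕ) (A : Finset (Fin n)) :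
    Submodule F (Fin n → F) where
  carrier := {c | ∀ i ∉ A, c i = 0}
  add_mem' := by intro a b ha hb i hi; simp [ha i hi, hb i hi]
  zero_mem' := by intro i hi; rfl
  smul_mem' := by intro r a ha i hi; simp [ha i hi]

lemma mem_suppMod {A : Finset (Fin n)} {c : Fin n → F} :
    c ∈ suppMod F n A ↔ ∀ i ∉ A, c i = 0 := Iff.rfl

lemma suppMod_mono {A B : Finset (Fin n)} (h : A ⊆ B) :
    suppMod F n A ≤ suppMod F n B := by
  intro c hc i hi
  exact hc i (fun hiA => hi (h hiA))

noncomputable def suppModEquiv (A : Finset (Fin n)) :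
    (suppMod F n A) ≃ₗ[F] (↥A → F) where
  toFun c := fun i => c.1 i.1
  map_add' := fun a b => rfl
  map_smul' := fun r a => rfl
  invFun g := ⟨fun j => if h : j ∈ A then g ⟨j, h⟩ else 0, by
    intro i hi; simp [hi]⟩
  left_inv := by
    rintro ⟨c, hc⟩
    ext j
    by_cases h : j ∈ A <;> simp [h, hc j]
  right_inv := by
    intro g; ext ⟨j, hj⟩; simp [hj]

lemma finrank_suppMod (A : Finset (Fin n)) :
    finrank F (suppMod F n A) = A.card := by
  rw [(suppModEquiv A).finrank_eq, finrank_pi, Fintype.card_coe]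

lemma finrank_inf_suppMod_le (C : Submodule F (Fin n → F)) (d : ℕ)
    (hd : ∀ c ∈ C, c ≠ 0 → d ≤ hammingNorm c)
    (A T : Finset (Fin n)) (hT : T ⊆ A) (hcard : A.card - T.card < d) :
    finrank F ↥(C ⊓ suppMod F n A) ≤ T.card := by
  have hinj : Function.Injective
      ((LinearMap.funLeft F F (fun i : ↥T => (i : Fin n))).comp
        (C ⊓ suppMod F n A).subtype) := by
    rw [← LinearMap.ker_eq_bot, LinearMap.ker_eq_bot']
    rintro ⟨c, hc⟩ h0
    have hcC : c ∈ C := hc.1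
    have hcA : ∀ i ∉ A, c i = 0 := hc.2
    have hT0 : ∀ i ∈ T, c i = 0 := by
      intro i hi
      have := congrFun h0 ⟨i, hi⟩
      simpa [LinearMap.funLeft] using this
    have hc0 : c = 0 := by
      by_contra hne
      have hle : d ≤ hammingNorm c := hd c hcC hne
      have hsub : (univ.filter fun i => c i ≠ 0) ⊆ A \ T := by
        intro i hi
        simp only [mem_filter, mem_univ, true_and] at hi
        refine mem_sdiff.2 ⟨?_, ?_⟩
        · by_contra hiA; exact hi (hcA i hiA)
        · intro hiT; exact hi (hT0 i hiT)
      have : hammingNorm c ≤ (A \ T).card := by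
        simpa [hammingNorm] using Finset.card_le_card hsub
      rw [Finset.card_sdiff_of_subset hT] at this
      omega
    simp [Subtype.ext_iff, hc0]
  have := LinearMap.finrank_le_finrank_of_injective hinj
  simpa [finrank_pi, Fintype.card_coe] using this

/-- A subspace over a large enough finite field is not a union of few
proper subspaces. -/
lemma exists_avoid (V : Submodule F (Fin n → F)) {ι : Type} (s : Finset ι)
    (U : ι → Submodule F (Fin n → F)) (hU : ∀ i ∈ s, U i < V)
    (hs : s.card < Fintype.card F) :
    ∃ x ∈ V, ∀ i ∈ s, x ∉ U i := by
  classical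
  rcases s.eq_empty_or_nonempty with rfl | ⟨i₀, hi₀⟩
  · exact ⟨0, V.zero_mem, by simp⟩
  by_contra hcon
  push_neg at hcon
  set q := Fintype.card F with hq
  have hr : 0 < finrank F V := by
    have hne : V ≠ ⊥ := fun hbot => not_lt_bot (hbot ▸ hU i₀ hi₀)
    have : Nontrivial ↥V := Submodule.nontrivial_iff_ne_bot.mpr hne
    exact finrank_pos
  have hcover : (univ.filter (· ∈ V)) ⊆ s.biUnion (fun i => univ.filter (· ∈ U i)) := by
    intro x hx
    simp only [mem_filter, mem_univ, true_and] at hx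
    obtain ⟨i, hi, hxi⟩ := hcon x hx
    exact mem_biUnion.2 ⟨i, hi, by simp [hxi]⟩
  have hVcard : (univ.filter (· ∈ V)).card = q ^ finrank F V := by
    rw [← Fintype.card_subtype]
    exact card_eq_pow_finrank
  have hUcard : ∀ i ∈ s, (univ.filter (· ∈ U i)).card ≤ q ^ (finrank F V - 1) := by
    intro i hi
    have h1 : (univ.filter (· ∈ U i)).card = q ^ finrank F (U i) := by
      rw [← Fintype.card_subtype]
      exact card_eq_pow_finrank
    have h2 : finrank F (U i) < finrank F V :=
      Submodule.finrank_lt_finrank_of_lt (hU i hi)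
    rw [h1]
    exact Nat.pow_le_pow_right Fintype.card_pos (by omega)
  have hle : q ^ finrank F V ≤ s.card * q ^ (finrank F V - 1) := by
    calc q ^ finrank F V = (univ.filter (· ∈ V)).card := hVcard.symm
      _ ≤ (s.biUnion (fun i => univ.filter (· ∈ U i))).card := Finset.card_le_card hcover
      _ ≤ ∑ i ∈ s, (univ.filter (· ∈ U i)).card := Finset.card_biUnion_le
      _ ≤ ∑ i ∈ s, q ^ (finrank F V - 1) := Finset.sum_le_sum hUcard
      _ = s.card * q ^ (finrank F V - 1) := by rw [Finset.sum_const, smul_eq_mul]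
  have hqpow : q ^ finrank F V = q * q ^ (finrank F V - 1) := by
    rw [← pow_succ']
    congr 1
    omega
  have hpos : 0 < q ^ (finrank F V - 1) := pow_pos Fintype.card_pos _
  rw [hqpow] at hle
  have hlt : s.card * q ^ (finrank F V - 1) < q * q ^ (finrank F V - 1) :=
    mul_lt_mul_of_pos_right hs hpos
  omega

/-- Key lemma: an MDS code has a codeword with any prescribed support of
size at least `d = n - k + 1`. -/
lemma mds_exists_support (C : Submodule F (Fin n → F)) (k : ℕ)
    (hk : finrank F C = k) (hcard : n < Fintype.card F)
    (hd : ∀ c ∈ C, c ≠ 0 → n - k + 1 ≤ hammingNorm c)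
    (A : Finset (Fin n)) (hA : n - k + 1 ≤ A.card) :
    ∃ x ∈ C, ∀ i, x i ≠ 0 ↔ i ∈ A := by
  classical
  have hkn : k ≤ n := by
    have := Submodule.finrank_le C
    rwa [hk, finrank_pi, Fintype.card_fin] at this
  have hAn : A.card ≤ n := by
    simpa using Finset.card_le_card (Finset.subset_univ A)
  -- lower bound on finrank of the rectangle subcode
  have hlow : k + A.card - n ≤ finrank F ↥(C ⊓ suppMod F n A) := by
    have heq := Submodule.finrank_sup_add_finrank_inf_eq C (suppMod F n A)
    have hsup : finrank F ↥(C ⊔ suppMod F n A) ≤ n := by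
      have := Submodule.finrank_le (C ⊔ suppMod F n A)
      rwa [finrank_pi, Fintype.card_fin] at this
    rw [hk, finrank_suppMod] at heq
    omega
  -- the proper subspaces
  have hUlt : ∀ i ∈ A, C ⊓ suppMod F n (A.erase i) < C ⊓ suppMod F n A := by
    intro i hi
    have hle : C ⊓ suppMod F n (A.erase i) ≤ C ⊓ suppMod F n A :=
      inf_le_inf_left C (suppMod_mono (Finset.erase_subset i A))
    have hup : finrank F ↥(C ⊓ suppMod F n (A.erase i)) ≤ A.card - 1 - (n - k) := by
      obtain ⟨T, hTsub, hTcard⟩ := Finset.exists_subset_card_eq (s := A.erase i)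
        (n := (A.erase i).card - (n - k)) (Nat.sub_le _ _)
      have hAe : (A.erase i).card = A.card - 1 := Finset.card_erase_of_mem hi
      have hcardT : (A.erase i).card - T.card < n - k + 1 := by omega
      have h := finrank_inf_suppMod_le C (n - k + 1) hd (A.erase i) T hTsub hcardT
      omega
    refine lt_of_le_of_ne hle ?_
    intro hEq
    have : finrank F ↥(C ⊓ suppMod F n A) ≤ A.card - 1 - (n - k) := hEq ▸ hup
    omega
  obtain ⟨x, hxV, hxU⟩ := exists_avoid (C ⊓ suppMod F n A) A
    (fun i => C ⊓ suppMod F n (A.erase i)) hUlt (lt_of_le_of_lt hAn hcard)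
  refine ⟨x, hxV.1, fun i => ?_⟩
  constructor
  · intro hne
    by_contra hiA
    exact hne (hxV.2 i hiA)
  · intro hiA hzero
    apply hxU i hiA
    refine ⟨hxV.1, ?_⟩
    intro j hj
    by_cases hjA : j ∈ A
    · have : j = i := by
        by_contra hji
        exact hj (Finset.mem_erase.2 ⟨hji, hjA⟩)
      rw [this]; exact hzero
    · exact hxV.2 j hjA

end Aux


/-- Proposition on obvious stopping sets: for a product code
`C_P = C₁ ⊗ C₂` with non-binary MDS components (`q > max(n₁,n₂) > 2`), every
obvious type-II stopping set, i.e. a full rectangle `A ×ˢ B` with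
`|A| ≥ d₁` rows and `|B| ≥ d₂` columns, is the support of a codeword of `C_P`:
there exist `x ∈ C₁` with support `A` and `y ∈ C₂` with support `B` such that
the Kronecker product `x ⊗ y` lies in the product code (all its columns are in
`C₁` and all its rows are in `C₂`) and has support exactly `A ×ˢ B`. -/
theorem obvious_stoppingSet_is_codeword_support
    (q n₁ k₁ d₁ n₂ k₂ d₂ : ℕ) (F : Type) [Field F] [Fintype F] [DecidableEq F]
    (hq : Fintype.card F = q)
    (hqn : max n₁ n₂ < q) (hn : 2 < max n₁ n₂)
    (C₁ : Submodule F (Fin n₁ → F)) (C₂ : Submodule F (Fin n₂ → F))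
    (hk₁ : Module.finrank F C₁ = k₁) (hk₂ : Module.finrank F C₂ = k₂)
    (hmin₁ : (∀ c ∈ C₁, c ≠ 0 → d₁ ≤ hammingNorm c) ∧
      ∃ c ∈ C₁, c ≠ 0 ∧ hammingNorm c = d₁)
    (hmin₂ : (∀ c ∈ C₂, c ≠ 0 → d₂ ≤ hammingNorm c) ∧
      ∃ c ∈ C₂, c ≠ 0 ∧ hammingNorm c = d₂)
    (hMDS₁ : d₁ = n₁ - k₁ + 1) (hMDS₂ : d₂ = n₂ - k₂ + 1)
    (A : Finset (Fin n₁)) (B : Finset (Fin n₂))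
    (hA : d₁ ≤ A.card) (hB : d₂ ≤ B.card) :
    ∃ x ∈ C₁, ∃ y ∈ C₂,
      (∀ i, x i ≠ 0 ↔ i ∈ A) ∧ (∀ j, y j ≠ 0 ↔ j ∈ B) ∧
      (∀ j : Fin n₂, (fun i => x i * y j) ∈ C₁) ∧
      (∀ i : Fin n₁, (fun j => x i * y j) ∈ C₂) ∧
      (∀ p : Fin n₁ × Fin n₂, x p.1 * y p.2 ≠ 0 ↔ p ∈ A ×ˢ B) := by
  have hqn₁ : n₁ < Fintype.card F := by rw [hq]; exact lt_of_le_of_lt (le_max_left _ _) hqn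
  have hqn₂ : n₂ < Fintype.card F := by rw [hq]; exact lt_of_le_of_lt (le_max_right _ _) hqn
  have hd₁ : ∀ c ∈ C₁, c ≠ 0 → n₁ - k₁ + 1 ≤ hammingNorm c := fun c hc hc0 =>
    hMDS₁ ▸ hmin₁.1 c hc hc0
  have hd₂ : ∀ c ∈ C₂, c ≠ 0 → n₂ - k₂ + 1 ≤ hammingNorm c := fun c hc hc0 =>
    hMDS₂ ▸ hmin₂.1 c hc hc0
  obtain ⟨x, hxC, hxsupp⟩ := mds_exists_support C₁ k₁ hk₁ hqn₁ hd₁ A (hMDS₁ ▸ hA)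
  obtain ⟨y, hyC, hysupp⟩ := mds_exists_support C₂ k₂ hk₂ hqn₂ hd₂ B (hMDS₂ ▸ hB)
  refine ⟨x, hxC, y, hyC, hxsupp, hysupp, ?_, ?_, ?_⟩
  · intro j
    have : (fun i => x i * y j) = (y j) • x := by
      funext i; simp [mul_comm]
    rw [this]
    exact C₁.smul_mem _ hxC
  · intro i
    have : (fun j => x i * y j) = (x i) • y := by
      funext j; simp
    rw [this]
    exact C₂.smul_mem _ hyC
  · intro p
    rw [Finset.mem_product, mul_ne_zero_iff, hxsupp p.1, hysupp p.2]
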